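/- Suppose A ⊆ D and δ > 0 with A_δ := ∪_{a∈A} B_ℝ²(a,δ) ⊆ D, and suppose every axis-parallel square of side length δ/1000 (from the standard dissection of ℝ²) contained in A_δ contains at least one point of the locally finite set Z ⊆ D. Then for every u ∈ A: (i) there exists z ∈ Z with ‖u−z‖ < δ, and (ii) the hyperbolic nearest-point distance satisfies inf_{z∈Z} dist_H(u,z) = inf_{z∈Z, ‖u−z‖<δ} dist_H(u,z). -/

import Mathlib

noncomputable def distH (u v : EuclideanSpace ℝ (Fin 2)) : ℝ :=
  2 * Real.arsinh (‖u - v‖ / Real.sqrt ((1 - ‖u‖ ^ 2) * (1 - ‖v‖ ^ 2)))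

/-- The axis-parallel square with corner `(m·s, n·s)` and side length `s` from the
standard dissection of the plane. -/
def square (s : ℝ) (m n : ℤ) : Set (EuclideanSpace ℝ (Fin 2)) :=
  {x | (m : ℝ) * s ≤ x 0 ∧ x 0 ≤ ((m : ℝ) + 1) * s ∧
       (n : ℝ) * s ≤ x 1 ∧ x 1 ≤ ((n : ℝ) + 1) * s}

local notation "E2" => EuclideanSpace ℝ (Fin 2)

lemma norm_le_of_coords {x : E2} {s : ℝ} (h0 : |x 0| ≤ s) (h1 : |x 1| ≤ s) :
    ‖x‖ ≤ Real.sqrt 2 * s := by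
  have hs : 0 ≤ s := le_trans (abs_nonneg _) h0
  rw [EuclideanSpace.norm_eq, Fin.sum_univ_two]
  have : ‖x 0‖ ^ 2 + ‖x 1‖ ^ 2 ≤ 2 * s ^ 2 := by
    have := abs_le.mp h0; have := abs_le.mp h1
    simp only [Real.norm_eq_abs]
    nlinarith [sq_abs (x 0), sq_abs (x 1), abs_nonneg (x 0), abs_nonneg (x 1),
      sq_nonneg (|x 0| - s), sq_nonneg (|x 1| - s)]
  calc Real.sqrt (‖x 0‖ ^ 2 + ‖x 1‖ ^ 2) ≤ Real.sqrt (2 * s ^ 2) := Real.sqrt_le_sqrt this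
  _ = Real.sqrt 2 * s := by
      rw [Real.sqrt_mul (by norm_num), Real.sqrt_sq hs]

lemma mem_square_floor {s : ℝ} (hs : 0 < s) (p : E2) :
    p ∈ square s ⌊p 0 / s⌋ ⌊p 1 / s⌋ := by
  refine ⟨?_, ?_, ?_, ?_⟩
  · exact (le_div_iff₀ hs).mp (Int.floor_le _)
  · exact le_of_lt ((div_lt_iff₀ hs).mp (Int.lt_floor_add_one (p 0 / s)))
  · exact (le_div_iff₀ hs).mp (Int.floor_le _)
  · exact le_of_lt ((div_lt_iff₀ hs).mp (Int.lt_floor_add_one (p 1 / s)))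

lemma square_diam {s : ℝ} {m n : ℤ} {p q : E2}
    (hp : p ∈ square s m n) (hq : q ∈ square s m n) :
    dist p q ≤ Real.sqrt 2 * s := by
  obtain ⟨hp0, hp0', hp1, hp1'⟩ := hp
  obtain ⟨hq0, hq0', hq1, hq1'⟩ := hq
  rw [dist_eq_norm]
  apply norm_le_of_coords
  · have : (p - q) 0 = p 0 - q 0 := rfl
    rw [this, abs_le]; constructor <;> linarith
  · have : (p - q) 1 = p 1 - q 1 := rfl
    rw [this, abs_le]; constructor <;> linarith

lemma ball_char (u : E2) (k : ℝ) (hk : 0 < k) (v : E2) :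
    dist v ((1 + k)⁻¹ • u) ^ 2 ≤ k * (1 + k - ‖u‖ ^ 2) / (1 + k) ^ 2 ↔
      ‖u - v‖ ^ 2 ≤ k * (1 - ‖v‖ ^ 2) := by
  have hK : (0:ℝ) < 1 + k := by linarith
  have h1 : (1 + k) ^ 2 * dist v ((1 + k)⁻¹ • u) ^ 2 = ‖(1 + k) • v - u‖ ^ 2 := by
    rw [dist_eq_norm]
    have : (1 + k) • (v - (1 + k)⁻¹ • u) = (1 + k) • v - u := by
      rw [smul_sub, smul_inv_smul₀ (ne_of_gt hK)]
    calc (1 + k) ^ 2 * ‖v - (1 + k)⁻¹ • u‖ ^ 2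
        = (|1 + k| * ‖v - (1 + k)⁻¹ • u‖) ^ 2 := by
          rw [mul_pow, sq_abs]
      _ = ‖(1 + k) • (v - (1 + k)⁻¹ • u)‖ ^ 2 := by rw [norm_smul, Real.norm_eq_abs]
      _ = ‖(1 + k) • v - u‖ ^ 2 := by rw [this]
  have h2 : ‖(1 + k) • v - u‖ ^ 2
      = (1 + k) ^ 2 * ‖v‖ ^ 2 - 2 * (1 + k) * (inner ℝ v u : ℝ) + ‖u‖ ^ 2 := by
    rw [@norm_sub_sq_real, norm_smul, real_inner_smul_left, Real.norm_eq_abs,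
      mul_pow, sq_abs]
    ring
  have h3 : ‖u - v‖ ^ 2 = ‖u‖ ^ 2 - 2 * (inner ℝ v u : ℝ) + ‖v‖ ^ 2 := by
    rw [@norm_sub_sq_real, real_inner_comm]
  rw [le_div_iff₀ (by positivity : (0:ℝ) < (1 + k) ^ 2), mul_comm, h1, h2, h3]
  constructor <;> intro h <;> nlinarith [h, hk]

lemma key (u z : E2) (k δ : ℝ) (hk : 0 < k) (hδ : 0 < δ) (hu : ‖u‖ < 1)
    (hzmem : ‖u - z‖ ^ 2 ≤ k * (1 - ‖z‖ ^ 2)) (hfar : δ ≤ ‖u - z‖) :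
    ∃ p : E2, dist u p ≤ δ / 4 ∧
      ∀ q : E2, dist q p ≤ δ / 4 → ‖u - q‖ ^ 2 ≤ k * (1 - ‖q‖ ^ 2) := by
  set c : E2 := (1 + k)⁻¹ • u with hc
  set R2 : ℝ := k * (1 + k - ‖u‖ ^ 2) / (1 + k) ^ 2 with hR2def
  have humem : dist u c ^ 2 ≤ R2 := by
    rw [ball_char u k hk]
    have : ‖u - u‖ = 0 := by simp
    rw [this]
    have h1 : 0 < 1 - ‖u‖ ^ 2 := by nlinarith [norm_nonneg u]
    nlinarith [mul_pos hk h1]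
  have hzc : dist z c ^ 2 ≤ R2 := (ball_char u k hk z).mpr hzmem
  have hR2 : 0 ≤ R2 := le_trans (sq_nonneg _) humem
  set ρ : ℝ := Real.sqrt R2 with hρdef
  have hρsq : ρ ^ 2 = R2 := Real.sq_sqrt hR2
  have huρ : dist u c ≤ ρ := by
    nlinarith [dist_nonneg (x := u) (y := c), Real.sqrt_nonneg R2]
  have hzρ : dist z c ≤ ρ := by
    nlinarith [dist_nonneg (x := z) (y := c), Real.sqrt_nonneg R2]
  have hρδ : δ / 2 ≤ ρ := by
    have : dist u z ≤ dist u c + dist c z := dist_triangle u c z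
    rw [dist_eq_norm] at this
    have := hfar.trans this
    rw [dist_comm c z] at this
    linarith
  have main : ∀ p : E2, dist p c ≤ ρ - δ / 4 →
      ∀ q : E2, dist q p ≤ δ / 4 → ‖u - q‖ ^ 2 ≤ k * (1 - ‖q‖ ^ 2) := by
    intro p hp q hq
    rw [← ball_char u k hk]
    have hqc : dist q c ≤ ρ := by
      have := dist_triangle q p c
      linarith
    nlinarith [dist_nonneg (x := q) (y := c)]
  by_cases hcu : dist u c ≤ δ / 4
  · refine ⟨c, hcu, main c ?_⟩
    simp only [dist_self]
    linarith
  · push_neg at hcu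
    have hucpos : (0:ℝ) < dist u c := by linarith
    set t : ℝ := (δ / 4) / dist u c with ht
    have ht0 : 0 < t := by positivity
    have ht1 : t < 1 := by
      rw [ht, div_lt_one hucpos]; linarith
    refine ⟨u + t • (c - u), ?_, ?_⟩
    · have : dist u (u + t • (c - u)) = ‖t • (c - u)‖ := by
        rw [dist_eq_norm]
        simp [neg_smul]
      rw [this, norm_smul, Real.norm_eq_abs, abs_of_pos ht0, ht]
      rw [← dist_eq_norm, dist_comm c u]
      rw [div_mul_eq_mul_div, mul_div_assoc, div_self (ne_of_gt hucpos), mul_one]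
    · apply main
      have heq : u + t • (c - u) - c = (1 - t) • (u - c) := by
        rw [smul_sub, sub_smul, one_smul, smul_sub]
        abel
      rw [dist_eq_norm, heq, norm_smul, Real.norm_eq_abs, abs_of_pos (by linarith),
        ← dist_eq_norm]
      have : (1 - t) * dist u c = dist u c - δ / 4 := by
        rw [ht]; field_simp
      rw [this]
      linarith

lemma distH_nonneg (u v : E2) : 0 ≤ distH u v := by
  have : 0 ≤ Real.arsinh (‖u - v‖ / Real.sqrt ((1 - ‖u‖ ^ 2) * (1 - ‖v‖ ^ 2))) := by
    rw [Real.arsinh_nonneg_iff]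
    positivity
  unfold distH; linarith

lemma distH_le {u v w : E2} (hu : ‖u‖ < 1) (hv : ‖v‖ < 1) (hw : ‖w‖ < 1)
    (h : ‖u - v‖ ^ 2 * (1 - ‖w‖ ^ 2) ≤ ‖u - w‖ ^ 2 * (1 - ‖v‖ ^ 2)) :
    distH u v ≤ distH u w := by
  have ha : 0 < 1 - ‖u‖ ^ 2 := by nlinarith [norm_nonneg u]
  have hdv : 0 < 1 - ‖v‖ ^ 2 := by nlinarith [norm_nonneg v]
  have hdw : 0 < 1 - ‖w‖ ^ 2 := by nlinarith [norm_nonneg w]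
  unfold distH
  have h2 : ‖u - v‖ / Real.sqrt ((1 - ‖u‖ ^ 2) * (1 - ‖v‖ ^ 2))
      ≤ ‖u - w‖ / Real.sqrt ((1 - ‖u‖ ^ 2) * (1 - ‖w‖ ^ 2)) := by
    rw [div_le_div_iff₀ (by positivity) (by positivity)]
    have e1 : ‖u - v‖ * Real.sqrt ((1 - ‖u‖ ^ 2) * (1 - ‖w‖ ^ 2))
        = Real.sqrt (‖u - v‖ ^ 2 * ((1 - ‖u‖ ^ 2) * (1 - ‖w‖ ^ 2))) := by
      rw [Real.sqrt_mul (sq_nonneg ‖u - v‖), Real.sqrt_sq (norm_nonneg _)]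
    have e2 : ‖u - w‖ * Real.sqrt ((1 - ‖u‖ ^ 2) * (1 - ‖v‖ ^ 2))
        = Real.sqrt (‖u - w‖ ^ 2 * ((1 - ‖u‖ ^ 2) * (1 - ‖v‖ ^ 2))) := by
      rw [Real.sqrt_mul (sq_nonneg ‖u - w‖), Real.sqrt_sq (norm_nonneg _)]
    rw [e1, e2]
    apply Real.sqrt_le_sqrt
    nlinarith [h, ha]
  have := Real.arsinh_le_arsinh.mpr h2
  linarith

theorem stmt17 (A : Set (EuclideanSpace ℝ (Fin 2))) (δ : ℝ) (hδ : 0 < δ)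
    (hA : A ⊆ Metric.ball (0 : EuclideanSpace ℝ (Fin 2)) 1)
    (hAδ : (⋃ a ∈ A, Metric.ball a δ) ⊆ Metric.ball (0 : EuclideanSpace ℝ (Fin 2)) 1)
    (Z : Set (EuclideanSpace ℝ (Fin 2)))
    (hZD : ∀ z ∈ Z, ‖z‖ < 1)
    (hloc : ∀ s : Set (EuclideanSpace ℝ (Fin 2)), Bornology.IsBounded s → (Z ∩ s).Finite)
    -- every square of side `δ/1000` contained in `A_δ` contains a point of `Z`
    (hsq : ∀ m n : ℤ, square (δ / 1000) m n ⊆ (⋃ a ∈ A, Metric.ball a δ) →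
      (Z ∩ square (δ / 1000) m n).Nonempty) :
    ∀ u ∈ A,
      (∃ z ∈ Z, dist u z < δ) ∧
      sInf ((fun z => distH u z) '' Z)
        = sInf ((fun z => distH u z) '' {z ∈ Z | dist u z < δ}) := by
  intro u huA
  have hs0 : 0 < δ / 1000 := by positivity
  have hsqrt2 : Real.sqrt 2 ≤ 2 := by
    nlinarith [Real.sq_sqrt (by norm_num : (0:ℝ) ≤ 2), Real.sqrt_nonneg 2]
  have hside : Real.sqrt 2 * (δ / 1000) ≤ δ / 4 := by
    nlinarith [Real.sqrt_nonneg 2]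
  have ballsub : Metric.ball u δ ⊆ ⋃ a ∈ A, Metric.ball a δ := fun x hx =>
    Set.mem_biUnion huA hx
  -- generic finder: near any point p within δ/4 of u there is a point of Z
  have find : ∀ p : EuclideanSpace ℝ (Fin 2), dist u p ≤ δ / 4 →
      ∃ z ∈ Z, dist p z ≤ δ / 4 ∧ dist u z < δ := by
    intro p hp
    have hmem := mem_square_floor hs0 p
    have hQsub : square (δ / 1000) ⌊p 0 / (δ / 1000)⌋ ⌊p 1 / (δ / 1000)⌋ ⊆
        ⋃ a ∈ A, Metric.ball a δ := by
      intro q hq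
      apply ballsub
      rw [Metric.mem_ball, dist_comm]
      have h1 : dist p q ≤ Real.sqrt 2 * (δ / 1000) := square_diam hmem hq
      have h2 : dist u q ≤ dist u p + dist p q := dist_triangle u p q
      linarith
    obtain ⟨z, hzZ, hzQ⟩ := hsq _ _ hQsub
    have h1 : dist p z ≤ Real.sqrt 2 * (δ / 1000) := square_diam hmem hzQ
    have h2 : dist u z ≤ dist u p + dist p z := dist_triangle u p z
    exact ⟨z, hzZ, by linarith, by linarith⟩
  obtain ⟨z0, hz0Z, _, hz0d⟩ := find u (by simp [hδ.le]; positivity)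
  refine ⟨⟨z0, hz0Z, hz0d⟩, ?_⟩
  -- part (ii)
  have hu1 : ‖u‖ < 1 := by
    have := hA huA
    rwa [mem_ball_zero_iff] at this
  have hZfin : Z.Finite := by
    have h := hloc (Metric.ball 0 1) Metric.isBounded_ball
    have : Z ∩ Metric.ball 0 1 = Z :=
      Set.inter_eq_self_of_subset_left (fun z hz => mem_ball_zero_iff.mpr (hZD z hz))
    rwa [this] at h
  set f : EuclideanSpace ℝ (Fin 2) → ℝ := fun z => distH u z with hf
  have bdd1 : BddBelow (f '' Z) := by
    refine ⟨0, fun x hx => ?_⟩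
    obtain ⟨z, _, rfl⟩ := hx
    exact distH_nonneg u z
  have bdd2 : BddBelow (f '' {z ∈ Z | dist u z < δ}) := by
    refine ⟨0, fun x hx => ?_⟩
    obtain ⟨z, _, rfl⟩ := hx
    exact distH_nonneg u z
  have hS2ne : (f '' {z ∈ Z | dist u z < δ}).Nonempty := ⟨f z0, ⟨z0, ⟨hz0Z, hz0d⟩, rfl⟩⟩
  have hS1ne : (f '' Z).Nonempty := ⟨f z0, ⟨z0, hz0Z, rfl⟩⟩
  apply le_antisymm
  · exact csInf_le_csInf bdd1 hS2ne (Set.image_mono (Set.sep_subset _ _))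
  · obtain ⟨zs, hzsZ, hzseq⟩ := hS1ne.csInf_mem (hZfin.image f)
    suffices h : ∃ z' ∈ Z, dist u z' < δ ∧ distH u z' ≤ distH u zs by
      obtain ⟨z', h1, h2, h3⟩ := h
      calc sInf (f '' {z ∈ Z | dist u z < δ}) ≤ f z' := csInf_le bdd2 ⟨z', ⟨h1, h2⟩, rfl⟩
        _ ≤ f zs := h3
        _ = sInf (f '' Z) := hzseq
    by_cases hclose : dist u zs < δ
    · exact ⟨zs, hzsZ, hclose, le_refl _⟩
    · push_neg at hclose
      rw [dist_eq_norm] at hclose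
      have hzs1 : ‖zs‖ < 1 := hZD _ hzsZ
      have dzs : 0 < 1 - ‖zs‖ ^ 2 := by nlinarith [norm_nonneg zs]
      set k : ℝ := ‖u - zs‖ ^ 2 / (1 - ‖zs‖ ^ 2) with hkdef
      have hk : 0 < k := div_pos (pow_pos (lt_of_lt_of_le hδ hclose) 2) dzs
      have hzmem : ‖u - zs‖ ^ 2 ≤ k * (1 - ‖zs‖ ^ 2) :=
        le_of_eq (div_mul_cancel₀ _ (ne_of_gt dzs)).symm
      obtain ⟨p, hp1, hp2⟩ := key u zs k δ hk hδ hu1 hzmem hclose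
      obtain ⟨z', hz'Z, hz'p, hz'd⟩ := find p hp1
      refine ⟨z', hz'Z, hz'd, ?_⟩
      have h2 := hp2 z' (by rwa [dist_comm] at hz'p)
      apply distH_le hu1 (hZD _ hz'Z) hzs1
      rw [hkdef, div_mul_eq_mul_div, le_div_iff₀ dzs] at h2
      linarith
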